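/- arXiv:1110.4080 — 3 statements merged into one kernel-verified Lean document; each statement's English description precedes it below -/
import Mathlib

section
/- Let I ⊆ R = K[x_0,...,x_n] be a saturated strongly stable ideal and x^A a contractible monomial in I (i.e., x^A ∉ I, x^A·x_{n−1} is a minimal generator of I, and every left-shift of x^A lies in I). Then the contraction I^con, generated by (G(I) ∪ {x^A}) \ {x^A x_r, x^A x_{r+1},..., x^A x_{n−1}} with r = max(x^A), is a saturated strongly stable ideal. -/
open MvPolynomial

noncomputable section

/-- The polynomial ring `K[x_0,…,x_n]` in `n+1` variables. -/
abbrev PR (K : Type*) [Field K] (n : ℕ) := MvPolynomial (Fin (n+1)) K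

variable {K : Type*} [Field K] {n : ℕ}

/-- The monomial `x^A`. -/
def mon (A : Fin (n+1) →₀ ℕ) : PR K n := monomial A 1

/-- Total degree of the monomial with exponent vector `A`. -/
def mdeg (A : Fin (n+1) →₀ ℕ) : ℕ := ∑ i, A i

/-- The largest index of a variable dividing `x^A` (0 if `A = 0`). -/
def maxIdx (A : Fin (n+1) →₀ ℕ) : Fin (n+1) := WithBot.unbotD 0 (A.support.max)

/-- The exponent vector of `(x_i / x_j) · x^A`. -/
def shiftM (A : Fin (n+1) →₀ ℕ) (i j : Fin (n+1)) : Fin (n+1) →₀ ℕ :=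
  A + Finsupp.single i 1 - Finsupp.single j 1

/-- `I` is a monomial ideal: generated by a set of monomials. -/
def IsMonomialIdeal (I : Ideal (PR K n)) : Prop :=
  ∃ S : Set (Fin (n+1) →₀ ℕ), I = Ideal.span ((fun A => (mon A : PR K n)) '' S)

/-- Strongly stable monomial ideal. -/
def StronglyStable (I : Ideal (PR K n)) : Prop :=
  ∀ A : Fin (n+1) →₀ ℕ, mon A ∈ I → ∀ i j : Fin (n+1), A j ≠ 0 → i < j →
    mon (shiftM A i j) ∈ I

/-- Stable monomial ideal. -/
def Stable (I : Ideal (PR K n)) : Prop :=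
  ∀ A : Fin (n+1) →₀ ℕ, A ≠ 0 → mon A ∈ I → ∀ i : Fin (n+1), i < maxIdx A →
    mon (shiftM A i (maxIdx A)) ∈ I

/-- `x^A` is a minimal monomial generator of `I`. -/
def MinGen (I : Ideal (PR K n)) (A : Fin (n+1) →₀ ℕ) : Prop :=
  mon A ∈ I ∧ ∀ B : Fin (n+1) →₀ ℕ, B ≤ A → B ≠ A → mon B ∉ I

/-- The set of exponent vectors of minimal monomial generators of `I`. -/
def Gens (I : Ideal (PR K n)) : Set (Fin (n+1) →₀ ℕ) := {A | MinGen I A}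

/-- The irrelevant maximal ideal `(x_0,…,x_n)`. -/
def irrIdeal (K : Type*) [Field K] (n : ℕ) : Ideal (PR K n) :=
  Ideal.span (Set.range fun i : Fin (n+1) => (X i : PR K n))

/-- `I` is saturated: `(I : (x_0,…,x_n)) = I`. -/
def Saturated (I : Ideal (PR K n)) : Prop :=
  Submodule.colon I (irrIdeal K n) = I

/-- The saturation `∪ₖ (I : (x_0,…,x_n)^k)`. -/
def saturationOf (I : Ideal (PR K n)) : Ideal (PR K n) :=
  ⨆ k : ℕ, Submodule.colon I (((irrIdeal K n) ^ k : Ideal (PR K n)) : Set (PR K n))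

/-- The Hilbert function of `R/I`: `j ↦ dim_K [R/I]_j`. -/
def hilbF {σ : Type*} (I : Ideal (MvPolynomial σ K)) (j : ℕ) : ℕ :=
  Module.finrank K
    ((homogeneousSubmodule σ K j).map (Ideal.Quotient.mkₐ K I).toLinearMap)

/-- `p` is the Hilbert polynomial of `R/I`. -/
def IsHilbPoly {σ : Type*} (I : Ideal (MvPolynomial σ K)) (p : Polynomial ℚ) : Prop :=
  ∃ N : ℕ, ∀ j : ℕ, N ≤ j → p.eval (j : ℚ) = (hilbF I j : ℚ)

/-- The binomial-coefficient polynomial `C(q, k) = q(q-1)⋯(q-k+1)/k!`. -/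
def choosePoly (q : Polynomial ℚ) (k : ℕ) : Polynomial ℚ :=
  ((k.factorial : ℚ))⁻¹ • ∏ j ∈ Finset.range k, (q - Polynomial.C (j : ℚ))

/-- The canonical representation `p(z) = Σ_{i=0}^d [C(z+i,i+1) − C(z+i−b_i,i+1)]`. -/
def canonicalHP (d : ℕ) (b : ℕ → ℕ) : Polynomial ℚ :=
  ∑ i ∈ Finset.range (d+1),
    (choosePoly (Polynomial.X + Polynomial.C (i : ℚ)) (i+1)
      - choosePoly (Polynomial.X + Polynomial.C (i : ℚ) - Polynomial.C (b i : ℚ)) (i+1))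

/-- `x^A >_lex x^B`. -/
def LexGt (A B : Fin (n+1) →₀ ℕ) : Prop :=
  ∃ i : Fin (n+1), (∀ j : Fin (n+1), j < i → A j = B j) ∧ B i < A i

/-- `I` is a lexsegment ideal. -/
def IsLexsegment (I : Ideal (PR K n)) : Prop :=
  IsMonomialIdeal I ∧ ∀ A B : Fin (n+1) →₀ ℕ, mdeg A = mdeg B → mon B ∈ I →
    LexGt A B → mon A ∈ I

/-- `I` is a homogeneous ideal. -/
def Homog (I : Ideal (PR K n)) : Prop :=
  ∀ f ∈ I, ∀ j : ℕ, homogeneousComponent j f ∈ I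

open Fin.NatCast in
/-- The set of right-shifts of `x^A`. -/
def rightShifts (A : Fin (n+1) →₀ ℕ) : Set (Fin (n+1) →₀ ℕ) :=
  {B | ∃ i : Fin (n+1), (i : ℕ) + 2 ≤ n ∧ A i ≠ 0 ∧
    B = shiftM A ((((i : ℕ) + 1 : ℕ)) : Fin (n+1)) i}

open Fin.NatCast in
/-- The set of left-shifts of `x^A`. -/
def leftShifts (A : Fin (n+1) →₀ ℕ) : Set (Fin (n+1) →₀ ℕ) :=
  {B | ∃ i : Fin (n+1), 1 ≤ (i : ℕ) ∧ (i : ℕ) + 1 ≤ n ∧ A i ≠ 0 ∧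
    B = shiftM A ((((i : ℕ) - 1 : ℕ)) : Fin (n+1)) i}

/-- The monomials `x^A x_r, …, x^A x_{n-1}` with `r = max(x^A)`. -/
def expSet (A : Fin (n+1) →₀ ℕ) : Set (Fin (n+1) →₀ ℕ) :=
  {B | ∃ j : Fin (n+1), ((maxIdx A : ℕ)) ≤ (j : ℕ) ∧ (j : ℕ) + 1 ≤ n ∧
    B = A + Finsupp.single j 1}

/-- `x^A ≠ 1` is expandable in `I`. -/
def Expandable (I : Ideal (PR K n)) (A : Fin (n+1) →₀ ℕ) : Prop :=
  A ≠ 0 ∧ MinGen I A ∧ ∀ B ∈ rightShifts A, ¬ MinGen I B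

open Fin.NatCast in
/-- `x^A ≠ 1` is contractible in `I`. -/
def Contractible (I : Ideal (PR K n)) (A : Fin (n+1) →₀ ℕ) : Prop :=
  A ≠ 0 ∧ mon A ∉ I ∧ MinGen I (A + Finsupp.single (((n - 1 : ℕ)) : Fin (n+1)) 1) ∧
    ∀ B ∈ leftShifts A, mon B ∈ I

/-- The expansion of `x^A` in `I`. -/
def expansionIdeal (I : Ideal (PR K n)) (A : Fin (n+1) →₀ ℕ) : Ideal (PR K n) :=
  Ideal.span ((fun B => (mon B : PR K n)) '' ((Gens I \ {A}) ∪ expSet A))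

/-- The contraction of `x^A` in `I`. -/
def contractionIdeal (I : Ideal (PR K n)) (A : Fin (n+1) →₀ ℕ) : Ideal (PR K n) :=
  Ideal.span ((fun B => (mon B : PR K n)) '' ((Gens I ∪ {A}) \ expSet A))

open Fin.NatCast in
/-- Setting `x_{n-1} = x_n = 1` in the exponent vector `A`. -/
def stripLastTwo (A : Fin (n+1) →₀ ℕ) : Fin (n+1) →₀ ℕ :=
  Finsupp.update (Finsupp.update A (((n : ℕ)) : Fin (n+1)) 0) (((n - 1 : ℕ)) : Fin (n+1)) 0

/-- The double saturation `sat_{x_{n-1},x_n}(I)` (as an ideal of `R`). -/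
def doubleSat (I : Ideal (PR K n)) : Ideal (PR K n) :=
  Ideal.span ((fun A => (mon (stripLastTwo A) : PR K n)) '' Gens I)

/-- Restriction of an exponent vector to the first `n` variables. -/
def restrictExp (A : Fin (n+1) →₀ ℕ) : Fin n →₀ ℕ :=
  Finsupp.comapDomain Fin.castSucc A (Fin.castSucc_injective n).injOn

/-- The ideal `I · R^{(1)}` in `K[x_0,…,x_{n-1}]` (for saturated monomial `I`). -/
def restrictIdeal (I : Ideal (PR K n)) : Ideal (MvPolynomial (Fin n) K) :=
  Ideal.span ((fun A => (monomial (restrictExp A) (1 : K) : MvPolynomial (Fin n) K)) '' Gens I)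

/-- Lex order on exponent vectors in `n` variables. -/
def LexGt' (A B : Fin n →₀ ℕ) : Prop :=
  ∃ i : Fin n, (∀ j : Fin n, j < i → A j = B j) ∧ B i < A i

/-- Monomial ideal in `K[x_0,…,x_{n-1}]`. -/
def IsMonomialIdeal' (I : Ideal (MvPolynomial (Fin n) K)) : Prop :=
  ∃ S : Set (Fin n →₀ ℕ),
    I = Ideal.span ((fun A => (monomial A (1 : K) : MvPolynomial (Fin n) K)) '' S)

/-- Lexsegment ideal in `K[x_0,…,x_{n-1}]`. -/
def IsLexsegment' (I : Ideal (MvPolynomial (Fin n) K)) : Prop :=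
  IsMonomialIdeal' I ∧ ∀ A B : Fin n →₀ ℕ, (∑ i, A i) = (∑ i, B i) →
    monomial B (1 : K) ∈ I → LexGt' A B → monomial A (1 : K) ∈ I

/-- `I` is almost lexsegment: saturated strongly stable with `I·R^{(1)}` lexsegment. -/
def AlmostLex (I : Ideal (PR K n)) : Prop :=
  IsMonomialIdeal I ∧ StronglyStable I ∧ Saturated I ∧ IsLexsegment' (restrictIdeal I)

/-- A graded free resolution of the ideal `I`, with `rank i` the rank of the `i`-th
free module and `twist i k` the degrees of the standard basis elements. -/
structure GradedFreeRes (I : Ideal (PR K n)) where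
  rank : ℕ → ℕ
  twist : (i : ℕ) → Fin (rank i) → ℕ
  diff : (i : ℕ) → ((Fin (rank (i+1)) → PR K n) →ₗ[PR K n] (Fin (rank i) → PR K n))
  aug : (Fin (rank 0) → PR K n) →ₗ[PR K n] PR K n
  aug_range : LinearMap.range aug = I
  aug_graded : ∀ k, aug (Pi.single k 1) ∈ homogeneousSubmodule (Fin (n+1)) K (twist 0 k)
  diff_graded : ∀ i k l, diff i (Pi.single k 1) l = 0 ∨
    (twist i l ≤ twist (i+1) k ∧
      diff i (Pi.single k 1) l ∈ homogeneousSubmodule (Fin (n+1)) K (twist (i+1) k - twist i l))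
  exact_aug : LinearMap.range (diff 0) = LinearMap.ker aug
  exact_diff : ∀ i, LinearMap.range (diff (i+1)) = LinearMap.ker (diff i)

/-- A resolution is minimal if all differential entries lie in the irrelevant ideal. -/
def MinimalRes {I : Ideal (PR K n)} (F : GradedFreeRes I) : Prop :=
  ∀ i k l, constantCoeff (F.diff i (Pi.single k 1) l) = 0


/-! ### Auxiliary lemmas for Statement 9 -/

lemma mon_mem_span_iff {S : Set (Fin (n+1) →₀ ℕ)} {B : Fin (n+1) →₀ ℕ} :
    (mon B : PR K n) ∈ Ideal.span ((fun A => (mon A : PR K n)) '' S) ↔ ∃ C ∈ S, C ≤ B := by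
  simp only [mon]
  rw [MvPolynomial.mem_ideal_span_monomial_image]
  simp [MvPolynomial.support_monomial]

lemma shiftM_apply (A : Fin (n+1) →₀ ℕ) (i j k : Fin (n+1)) :
    shiftM A i j k = A k + (if i = k then 1 else 0) - (if j = k then 1 else 0) := by
  simp [shiftM, Finsupp.tsub_apply, Finsupp.single_apply]

lemma shiftM_mono {A B : Fin (n+1) →₀ ℕ} (h : A ≤ B) (i j : Fin (n+1)) :
    shiftM A i j ≤ shiftM B i j := by
  rw [Finsupp.le_def]; intro k
  rw [shiftM_apply, shiftM_apply]
  have := Finsupp.le_def.mp h k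
  omega

lemma le_shiftM {C B : Fin (n+1) →₀ ℕ} (h : C ≤ B) {i j : Fin (n+1)} (hij : i ≠ j)
    (hj : C j < B j) : C ≤ shiftM B i j := by
  rw [Finsupp.le_def]; intro k
  have h1 := Finsupp.le_def.mp h k
  rw [shiftM_apply]
  rcases eq_or_ne j k with rfl | hk
  · rw [if_pos rfl, if_neg hij]; omega
  · rw [if_neg hk]; split_ifs <;> omega

lemma shift_shift {A : Fin (n+1) →₀ ℕ} {i j k : Fin (n+1)} (hAj : A j ≠ 0) (hkj : k ≠ j)
    (hik : i ≠ k) : shiftM (shiftM A k j) i k = shiftM A i j := by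
  ext m
  simp only [shiftM_apply]
  by_cases h1 : k = m <;> by_cases h2 : j = m <;> by_cases h3 : i = m <;>
    simp_all <;> omega

lemma mdeg_lt_of_lt {B E : Fin (n+1) →₀ ℕ} (hle : B ≤ E) (hne : B ≠ E) : mdeg B < mdeg E := by
  obtain ⟨k, hk⟩ := Finsupp.ne_iff.mp hne
  exact Finset.sum_lt_sum (fun i _ => Finsupp.le_def.mp hle i)
    ⟨k, Finset.mem_univ k, lt_of_le_of_ne (Finsupp.le_def.mp hle k) hk⟩

lemma exists_minGen (I : Ideal (PR K n)) (E : Fin (n+1) →₀ ℕ) (hE : (mon E : PR K n) ∈ I) :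
    ∃ D ∈ Gens I, D ≤ E := by
  suffices H : ∀ m : ℕ, ∀ E : Fin (n+1) →₀ ℕ, mdeg E = m → (mon E : PR K n) ∈ I →
      ∃ D ∈ Gens I, D ≤ E from H (mdeg E) E rfl hE
  intro m
  induction m using Nat.strong_induction_on with
  | _ m ih =>
    intro E hm hE
    by_cases h : ∀ B : Fin (n+1) →₀ ℕ, B ≤ E → B ≠ E → (mon B : PR K n) ∉ I
    · exact ⟨E, ⟨hE, h⟩, le_refl E⟩
    · push_neg at h
      obtain ⟨B, hBE, hBne, hBI⟩ := h
      obtain ⟨D, hD, hDB⟩ := ih (mdeg B) (hm ▸ mdeg_lt_of_lt hBE hBne) B rfl hBI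
      exact ⟨D, hD, hDB.trans hBE⟩

lemma mon_mul_X (B : Fin (n+1) →₀ ℕ) (i : Fin (n+1)) :
    (mon B : PR K n) * MvPolynomial.X i = mon (B + Finsupp.single i 1) := by
  simp [mon, MvPolynomial.X, MvPolynomial.monomial_mul]

open Fin.NatCast in
lemma gens_no_xn (I : Ideal (PR K n)) (hss : StronglyStable I) (hsat : Saturated I)
    {C : Fin (n+1) →₀ ℕ} (hC : C ∈ Gens I) : C (((n : ℕ)) : Fin (n+1)) = 0 := by
  set nn : Fin (n+1) := (((n : ℕ)) : Fin (n+1)) with hnn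
  have hnnv : (nn : ℕ) = n := by
    rw [hnn, Fin.val_natCast, Nat.mod_eq_of_lt (by omega)]
  by_contra h
  have hle : Finsupp.single nn 1 ≤ C := Finsupp.single_le_iff.mpr (Nat.one_le_iff_ne_zero.mpr h)
  set C' : Fin (n+1) →₀ ℕ := C - Finsupp.single nn 1 with hC'
  have hkey : ∀ i : Fin (n+1), (mon C' : PR K n) * MvPolynomial.X i ∈ I := by
    intro i
    rw [mon_mul_X]
    rcases eq_or_ne i nn with rfl | hne
    · rw [hC', tsub_add_cancel_of_le hle]
      exact hC.1
    · have hi : i < nn := by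
        rw [Fin.lt_def, hnnv]
        have := i.isLt
        have : (i : ℕ) ≠ n := fun hh => hne (Fin.ext (by rw [hnnv, hh]))
        omega
      have hmem := hss C hC.1 i nn h hi
      have : C' + Finsupp.single i 1 = shiftM C i nn := by
        rw [hC', shiftM, tsub_add_eq_add_tsub hle]
      rwa [this]
  have hcolon : (mon C' : PR K n) ∈ Submodule.colon I (irrIdeal K n) := by
    rw [Submodule.mem_colon]
    intro p hp
    induction hp using Submodule.span_induction with
    | mem x hx =>
      obtain ⟨i, rfl⟩ := hx
      rw [smul_eq_mul]
      exact hkey i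
    | zero => rw [smul_eq_mul, mul_zero]; exact I.zero_mem
    | add x y _ _ hx hy => rw [smul_eq_mul, mul_add]; exact I.add_mem hx hy
    | smul r x _ hx => rw [smul_eq_mul, mul_smul_comm]; exact I.smul_mem r hx
  rw [hsat] at hcolon
  refine hC.2 C' tsub_le_self ?_ hcolon
  intro heq
  have h1 : C' nn = C nn - 1 := by
    rw [hC', Finsupp.tsub_apply, Finsupp.single_eq_same]
  rw [heq] at h1
  omega

end
/-- the contraction of a contractible monomial in a saturated strongly
stable ideal is again a saturated strongly stable ideal. -/
theorem contraction_saturated_stronglyStable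
    {K : Type*} [Field K] {n : ℕ} (hn : 2 ≤ n) (I : Ideal (PR K n))
    (hmono : IsMonomialIdeal I) (hss : StronglyStable I) (hsat : Saturated I)
    (A : Fin (n+1) →₀ ℕ) (hA : Contractible I A) :
    IsMonomialIdeal (contractionIdeal I A) ∧ StronglyStable (contractionIdeal I A) ∧
      Saturated (contractionIdeal I A) := by
  classical
  set nn : Fin (n+1) := (open Fin.NatCast in (((n : ℕ)) : Fin (n+1))) with hnn
  have hnnv : (nn : ℕ) = n := by
    rw [hnn, Fin.val_natCast, Nat.mod_eq_of_lt (by omega)]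
  set S : Set (Fin (n+1) →₀ ℕ) := (Gens I ∪ {A}) \ expSet A with hS
  have hJ : contractionIdeal I A = Ideal.span ((fun B => (mon B : PR K n)) '' S) := rfl
  -- A does not involve x_n
  have hAn : A nn = 0 := by
    have hmg := hA.2.2.1
    have h0 := gens_no_xn I hss hsat (C := A + Finsupp.single (open Fin.NatCast in (((n - 1 : ℕ)) : Fin (n+1))) 1) hmg
    have hne : (open Fin.NatCast in (((n - 1 : ℕ)) : Fin (n+1))) ≠ nn := by
      intro hh
      have := congrArg Fin.val hh
      rw [Fin.val_natCast, Nat.mod_eq_of_lt (by omega), hnnv] at this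
      omega
    rw [Finsupp.add_apply, Finsupp.single_apply, if_neg hne] at h0
    rw [hnn]
    omega
  have hS0 : ∀ C ∈ S, C nn = 0 := by
    rintro C ⟨hC1, -⟩
    rcases hC1 with hC1 | hC1
    · exact gens_no_xn I hss hsat hC1
    · rw [Set.mem_singleton_iff] at hC1; rw [hC1]; exact hAn
  have hAS : A ∈ S := by
    refine ⟨Or.inr rfl, ?_⟩
    rintro ⟨j, -, -, hj⟩
    have := DFunLike.congr_fun hj j
    simp [Finsupp.add_apply, Finsupp.single_eq_same] at this
  refine ⟨⟨S, hJ⟩, ?_, ?_⟩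
  · -- strongly stable
    intro B hB i j hBj hij
    rw [hJ, mon_mem_span_iff] at hB ⊢
    obtain ⟨C, hC, hCB⟩ := hB
    by_cases hCj : C j < B j
    · exact ⟨C, hC, le_shiftM hCB hij.ne hCj⟩
    · have hCjB : C j = B j := le_antisymm (Finsupp.le_def.mp hCB j) (not_lt.mp hCj)
      have hCjne : C j ≠ 0 := by rw [hCjB]; exact hBj
      have hsh : (mon (shiftM C i j) : PR K n) ∈ I := by
        rcases hC.1 with hCG | hCA
        · exact hss C hCG.1 i j hCjne hij
        · rw [Set.mem_singleton_iff] at hCA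
          subst hCA
          have hjnn : (j : ℕ) ≠ n := by
            intro hh
            exact hCjne (by rw [show j = nn from Fin.ext (by rw [hnnv, hh])]; exact hAn)
          have h1j : 1 ≤ (j : ℕ) := by
            have := hij
            rw [Fin.lt_def] at this
            omega
          set j' : Fin (n+1) := (open Fin.NatCast in ((((j : ℕ) - 1 : ℕ)) : Fin (n+1))) with hj'
          have hj'v : (j' : ℕ) = (j : ℕ) - 1 := by
            rw [hj', Fin.val_natCast, Nat.mod_eq_of_lt (by omega)]
          have hj'j : j' ≠ j := by
            intro hh
            have := congrArg Fin.val hh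
            rw [hj'v] at this
            omega
          have hLS : shiftM C j' j ∈ leftShifts C := by
            refine ⟨j, h1j, by omega, hCjne, rfl⟩
          have hIs := hA.2.2.2 _ hLS
          rcases eq_or_ne i j' with rfl | hne
          · exact hIs
          · have hij' : i < j' := by
              rw [Fin.lt_def, hj'v]
              have h2 : (i : ℕ) < (j : ℕ) := Fin.lt_def.mp hij
              have h3 : (i : ℕ) ≠ (j' : ℕ) := fun hh => hne (Fin.ext hh)
              rw [hj'v] at h3
              omega
            have hnz : (shiftM C j' j) j' ≠ 0 := by
              rw [shiftM_apply, if_pos rfl, if_neg (fun hh => hj'j hh.symm)]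
              omega
            have := hss _ hIs i j' hnz hij'
            rwa [shift_shift hCjne hj'j hne] at this
      obtain ⟨D, hD, hDle⟩ := exists_minGen I _ hsh
      have hDB : D ≤ shiftM B i j := hDle.trans (shiftM_mono hCB i j)
      by_cases hDexp : D ∈ expSet A
      · obtain ⟨k, -, -, hk⟩ := hDexp
        refine ⟨A, hAS, le_trans ?_ hDB⟩
        rw [hk]
        exact le_self_add
      · exact ⟨D, ⟨Or.inl hD, hDexp⟩, hDB⟩
  · -- saturated
    apply le_antisymm
    · intro f hf
      have hXn : (MvPolynomial.X nn : PR K n) ∈ irrIdeal K n :=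
        Ideal.subset_span ⟨nn, rfl⟩
      have h1 : f * MvPolynomial.X nn ∈ contractionIdeal I A := by
        have := Submodule.mem_colon.mp hf _ hXn
        rwa [smul_eq_mul] at this
      rw [hJ] at h1 ⊢
      simp only [mon] at h1 ⊢
      rw [MvPolynomial.mem_ideal_span_monomial_image] at h1 ⊢
      intro xi hxi
      have hx2 : xi + Finsupp.single nn 1 ∈ (f * MvPolynomial.X nn).support := by
        rw [MvPolynomial.support_mul_X]
        exact Finset.mem_map.mpr ⟨xi, hxi, rfl⟩
      obtain ⟨C, hC, hCle⟩ := h1 _ hx2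
      refine ⟨C, hC, ?_⟩
      have hCn := hS0 C hC
      rw [Finsupp.le_def]
      intro k
      have hk := Finsupp.le_def.mp hCle k
      rw [Finsupp.add_apply, Finsupp.single_apply] at hk
      rcases eq_or_ne nn k with rfl | hne
      · rw [hCn]; exact Nat.zero_le _
      · rwa [if_neg hne, add_zero] at hk
    · intro f hf
      exact Submodule.mem_colon.mpr fun p _ => by
        rw [smul_eq_mul]; exact Ideal.mul_mem_right _ _ hf
end

section
/- In any saturated strongly stable ideal I ⊊ R and any fixed degree d in which I has minimal generators, the lexicographically smallest minimal monomial generator of I of degree d is expandable in I. -/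
open MvPolynomial

/-- in any degree `d`, the lexicographically smallest minimal monomial
generator of degree `d` of a saturated strongly stable ideal `I ⊊ R` is expandable. -/
theorem lex_smallest_minGen_expandable
    {K : Type*} [Field K] {n : ℕ} (I : Ideal (PR K n)) (hne : I ≠ ⊤)
    (hmono : IsMonomialIdeal I) (hss : StronglyStable I) (hsat : Saturated I)
    (d : ℕ) (A : Fin (n+1) →₀ ℕ) (hA : MinGen I A) (hdeg : mdeg A = d)
    (hmin : ∀ B : Fin (n+1) →₀ ℕ, MinGen I B → mdeg B = d → B ≠ A → LexGt B A) :
    Expandable I A := by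
  have hA0 : A ≠ 0 := by
    rintro rfl
    apply hne
    rw [Ideal.eq_top_iff_one]
    have h1 := hA.1
    simpa [mon] using h1
  refine ⟨hA0, hA, ?_⟩
  rintro B ⟨i, hi2, hAi, rfl⟩ hB
  open Fin.NatCast in
  set j : Fin (n+1) := (((i : ℕ) + 1 : ℕ) : Fin (n+1)) with hj
  have hjval : (j : ℕ) = (i : ℕ) + 1 := by
    have : (i : ℕ) + 1 < n + 1 := by omega
    rw [hj, Fin.val_natCast, Nat.mod_eq_of_lt this]
  have hji : j ≠ i := by
    intro h
    apply_fun (Fin.val) at h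
    omega
  -- single i 1 ≤ A + single j 1
  have hle : Finsupp.single i (1 : ℕ) ≤ A + Finsupp.single j 1 := by
    intro k
    rcases eq_or_ne k i with rfl | hk
    · simp only [Finsupp.single_eq_same, Finsupp.add_apply]
      have : 1 ≤ A k := Nat.one_le_iff_ne_zero.mpr hAi
      omega
    · simp [Finsupp.single_apply, Ne.symm hk]
  have hkey : shiftM A j i + Finsupp.single i 1 = A + Finsupp.single j 1 := by
    exact tsub_add_cancel_of_le hle
  have hmdeg_add : ∀ X Y : Fin (n+1) →₀ ℕ, mdeg (X + Y) = mdeg X + mdeg Y := by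
    intro X Y
    simp [mdeg, Finsupp.add_apply, Finset.sum_add_distrib]
  have hmdeg_single : ∀ k : Fin (n+1), mdeg (Finsupp.single k (1 : ℕ)) = 1 := by
    intro k
    simp [mdeg, Finsupp.single_apply]
  have hsum : mdeg (shiftM A j i) + 1 = mdeg A + 1 := by
    have := congrArg mdeg hkey
    rwa [hmdeg_add, hmdeg_add, hmdeg_single, hmdeg_single] at this
  have hdegB : mdeg (shiftM A j i) = d := by omega
  have hBi : shiftM A j i i + 1 = A i := by
    have := congrArg (fun f : Fin (n+1) →₀ ℕ => f i) hkey
    simpa [Finsupp.add_apply, Finsupp.single_apply, hji] using this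
  have hBA : shiftM A j i ≠ A := by
    intro h
    rw [h] at hBi
    omega
  obtain ⟨k, hagree, hlt⟩ := hmin _ hB hdegB hBA
  -- A k < (shiftM A j i) k forces k = j
  have hk : (shiftM A j i) k + Finsupp.single i 1 k = A k + Finsupp.single j 1 k := by
    have := congrArg (fun f : Fin (n+1) →₀ ℕ => f k) hkey
    simpa [Finsupp.add_apply] using this
  have hkj : k = j := by
    by_contra hkj
    have h1 : Finsupp.single j (1 : ℕ) k = 0 := by
      simp [Finsupp.single_apply, Ne.symm hkj]
    have h2 : (0 : ℕ) ≤ Finsupp.single i (1 : ℕ) k := Nat.zero_le _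
    omega
  rw [hkj] at hagree
  have hij : i < j := by
    rw [Fin.lt_def]
    omega
  have := hagree i hij
  omega
end

section
/- For any saturated strongly stable ideal I ⊆ R, there is a finite sequence of contractions transforming I into its double saturation sat_{x_{n−1},x_n}(I). -/
open MvPolynomial

open Fin.NatCast in
/-- A single contraction step: `J'` is obtained from `J` by contracting a contractible
monomial (with the convention that contracting `1` when `x_{n-1} ∈ G(J)` yields `(1)`). -/
def ContrStep {K : Type*} [Field K] {n : ℕ} (J J' : Ideal (PR K n)) : Prop :=
  (∃ A : Fin (n+1) →₀ ℕ, Contractible J A ∧ J' = contractionIdeal J A) ∨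
  (MinGen J (Finsupp.single (((n - 1 : ℕ)) : Fin (n+1)) 1) ∧ J' = ⊤)

/-! ### Auxiliary machinery for the proof -/

section AuxProof

open Fin.NatCast

variable {K : Type*} [Field K] {n : ℕ}

/-- The index `n-1` (the variable `x_{n-1}`). -/
private def penI (n : ℕ) : Fin (n+1) := ⟨n - 1, by omega⟩

/-- The index `n` (the variable `x_n`). -/
private def lastI (n : ℕ) : Fin (n+1) := Fin.last n

@[simp] private lemma penI_val : ((penI n : Fin (n+1)) : ℕ) = n - 1 := rfl
@[simp] private lemma lastI_val : ((lastI n : Fin (n+1)) : ℕ) = n := rfl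

private lemma cast_val_of_le {m : ℕ} (h : m ≤ n) : (((m : ℕ) : Fin (n+1)) : ℕ) = m := by
  rw [Fin.val_natCast, Nat.mod_eq_of_lt (by omega)]

private lemma cast_pen : (((n - 1 : ℕ)) : Fin (n+1)) = penI n := by
  apply Fin.ext; rw [cast_val_of_le (by omega)]; rfl

private lemma cast_last : (((n : ℕ)) : Fin (n+1)) = lastI n := by
  apply Fin.ext; rw [cast_val_of_le (by omega)]; rfl

/-- Divisibility of exponent vectors by a member of `S`. -/
private def DivS (S : Set (Fin (n+1) →₀ ℕ)) (A : Fin (n+1) →₀ ℕ) : Prop := ∃ s ∈ S, s ≤ A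

/-- The monomial ideal generated by the monomials with exponents in `S`. -/
private noncomputable def spanMon (K : Type*) [Field K] {n : ℕ} (S : Set (Fin (n+1) →₀ ℕ)) : Ideal (PR K n) :=
  Ideal.span ((fun B => (mon B : PR K n)) '' S)

private lemma mem_spanMon {S : Set (Fin (n+1) →₀ ℕ)} {f : PR K n} :
    f ∈ spanMon K S ↔ ∀ d ∈ f.support, DivS S d := by
  have h : ((fun B => (mon B : PR K n)) '' S) = ((fun s => monomial s (1:K)) '' S) := rfl
  rw [spanMon, h, mem_ideal_span_monomial_image]; rfl

private lemma mon_mem_spanMon {S : Set (Fin (n+1) →₀ ℕ)} {A : Fin (n+1) →₀ ℕ} :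
    (mon A : PR K n) ∈ spanMon K S ↔ DivS S A := by
  classical
  rw [mem_spanMon, mon, support_monomial, if_neg (one_ne_zero)]
  simp

private lemma mem_of_le {J : Ideal (PR K n)} {E B : Fin (n+1) →₀ ℕ}
    (h : (mon E : PR K n) ∈ J) (hle : E ≤ B) : (mon B : PR K n) ∈ J := by
  have : (mon B : PR K n) = mon (B - E) * mon E := by
    rw [mon, mon, mon, monomial_mul, mul_one, tsub_add_cancel_of_le hle]
  rw [this]
  exact J.mul_mem_left _ h

private lemma div_gens {J : Ideal (PR K n)} {A : Fin (n+1) →₀ ℕ}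
    (h : (mon A : PR K n) ∈ J) : DivS (Gens J) A := by
  induction A using WellFoundedLT.induction with
  | _ A ih =>
    by_cases hA : MinGen J A
    · exact ⟨A, hA, le_rfl⟩
    · rw [MinGen, not_and_or] at hA
      rcases hA with h' | h'
      · exact absurd h h'
      · push_neg at h'
        obtain ⟨B, hBA, hne, hB⟩ := h'
        obtain ⟨g, hg, hgB⟩ := ih B (lt_of_le_of_ne hBA hne) hB
        exact ⟨g, hg, hgB.trans hBA⟩

private lemma mon_mem_iff_div_gens {J : Ideal (PR K n)} {A : Fin (n+1) →₀ ℕ} :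
    (mon A : PR K n) ∈ J ↔ DivS (Gens J) A := by
  refine ⟨div_gens, ?_⟩
  rintro ⟨g, hg, hgA⟩
  exact mem_of_le hg.1 hgA

private lemma span_gens {J : Ideal (PR K n)} (hJ : IsMonomialIdeal J) :
    J = spanMon K (Gens J) := by
  obtain ⟨S, hS⟩ := hJ
  apply le_antisymm
  · nth_rewrite 1 [hS]
    rw [Ideal.span_le]
    rintro _ ⟨B, hB, rfl⟩
    have : (mon B : PR K n) ∈ J := by
      rw [hS]; exact Ideal.subset_span ⟨B, hB, rfl⟩
    exact mon_mem_spanMon.2 (div_gens this)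
  · rw [spanMon, Ideal.span_le]
    rintro _ ⟨B, hB, rfl⟩
    exact hB.1

private lemma gens_antichain (J : Ideal (PR K n)) : IsAntichain (· ≤ ·) (Gens J) :=
  fun A hA B hB hne hle => hB.2 A hle hne hA.1

private lemma gens_finite (J : Ideal (PR K n)) : (Gens J).Finite :=
  (gens_antichain J).finite_of_partiallyWellOrderedOn (Set.isPWO_of_wellQuasiOrderedLE _)

/-- The set of minimal generators, as a `Finset`. -/
private noncomputable def gensF (J : Ideal (PR K n)) : Finset (Fin (n+1) →₀ ℕ) :=
  (gens_finite J).toFinset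

@[simp] private lemma mem_gensF {J : Ideal (PR K n)} {A : Fin (n+1) →₀ ℕ} :
    A ∈ gensF J ↔ MinGen J A := by
  rw [gensF, Set.Finite.mem_toFinset]; rfl

/-- The measure: total degree in `x_{n-1}` of all minimal generators. -/
private noncomputable def meas (J : Ideal (PR K n)) : ℕ := ∑ A ∈ gensF J, A (penI n)

private lemma gens_spanMon_subset {S : Set (Fin (n+1) →₀ ℕ)} :
    Gens (spanMon K S) ⊆ S := by
  intro B hB
  obtain ⟨s, hs, hsB⟩ := mon_mem_spanMon.1 hB.1
  rcases eq_or_ne s B with rfl | hne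
  · exact hs
  · exact absurd (mon_mem_spanMon.2 ⟨s, hs, le_rfl⟩) (hB.2 s hsB hne)

private lemma strip_apply (A : Fin (n+1) →₀ ℕ) (i : Fin (n+1)) :
    stripLastTwo A i = if i = penI n then 0 else if i = lastI n then 0 else A i := by
  classical
  simp [stripLastTwo, cast_pen, cast_last, lastI, Finsupp.coe_update, Function.update_apply]
  congr

private lemma strip_le (A : Fin (n+1) →₀ ℕ) : stripLastTwo A ≤ A := by
  rw [Finsupp.le_def]; intro i; rw [strip_apply]; split_ifs <;> omega

private lemma strip_mono {A B : Fin (n+1) →₀ ℕ} (h : A ≤ B) :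
    stripLastTwo A ≤ stripLastTwo B := by
  rw [Finsupp.le_def]; intro i; rw [strip_apply, strip_apply]
  split_ifs <;> first | omega | exact h i

private lemma strip_eq_self {A : Fin (n+1) →₀ ℕ} (h1 : A (penI n) = 0) (h2 : A (lastI n) = 0) :
    stripLastTwo A = A := by
  ext i; rw [strip_apply]
  split_ifs with g1 g2
  · rw [g1, h1]
  · rw [g2, h2]
  · rfl

private lemma strip_add_single_pen (A : Fin (n+1) →₀ ℕ) (k : ℕ) :
    stripLastTwo (A + Finsupp.single (penI n) k) = stripLastTwo A := by
  ext i; rw [strip_apply, strip_apply]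
  split_ifs with g1 g2
  · rfl
  · rfl
  · rw [Finsupp.add_apply, Finsupp.single_apply, if_neg (fun h => g1 h.symm), add_zero]

private lemma doubleSat_eq (J : Ideal (PR K n)) :
    doubleSat J = spanMon K (stripLastTwo '' Gens J) := by
  rw [doubleSat, spanMon, Set.image_image]

private lemma mingen_last_zero {J : Ideal (PR K n)} (hss : StronglyStable J)
    (hsat : Saturated J) {A : Fin (n+1) →₀ ℕ} (hA : MinGen J A) : A (lastI n) = 0 := by
  by_contra hne
  have hA1 : 1 ≤ A (lastI n) := Nat.one_le_iff_ne_zero.2 hne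
  set A' := A - Finsupp.single (lastI n) 1 with hA'def
  have hle : A' ≤ A := tsub_le_self
  have hne' : A' ≠ A := by
    intro h
    have h2 := congrArg (fun f : Fin (n+1) →₀ ℕ => f (lastI n)) h
    simp only [hA'def, Finsupp.tsub_apply, Finsupp.single_eq_same] at h2
    omega
  have key : ∀ i : Fin (n+1), (X i : PR K n) * mon A' ∈ J := by
    intro i
    have hXi : (X i : PR K n) * mon A' = mon (Finsupp.single i 1 + A') := by
      rw [mon, mon, X, monomial_mul, one_mul]
    rcases eq_or_ne i (lastI n) with rfl | hi
    · have he : Finsupp.single (lastI n) 1 + A' = A := by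
        ext j
        simp only [hA'def, Finsupp.add_apply, Finsupp.tsub_apply, Finsupp.single_apply]
        rcases eq_or_ne (lastI n) j with h | h
        · rw [if_pos h, ← h]; omega
        · rw [if_neg h]; omega
      rw [hXi, he]; exact hA.1
    · have hlt : i < lastI n := lt_of_le_of_ne (Fin.le_last i) hi
      have hsh := hss A hA.1 i (lastI n) hne hlt
      have he : shiftM A i (lastI n) = Finsupp.single i 1 + A' := by
        ext j
        simp only [shiftM, hA'def, Finsupp.add_apply, Finsupp.tsub_apply, Finsupp.single_apply]
        rcases eq_or_ne i j with h1 | h1 <;> rcases eq_or_ne (lastI n) j with h2 | h2 <;>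
          simp_all <;> omega
      rw [hXi, ← he]; exact hsh
  have hcolon : (mon A' : PR K n) ∈ Submodule.colon J (irrIdeal K n) := by
    rw [Submodule.mem_colon]
    intro p hp
    rw [irrIdeal] at hp
    induction hp using Submodule.span_induction with
    | mem x hx =>
      obtain ⟨i, rfl⟩ := hx
      rw [smul_eq_mul, mul_comm]; exact key i
    | zero => rw [smul_zero]; exact J.zero_mem
    | add x y hx hy hpx hpy => rw [smul_add]; exact add_mem hpx hpy
    | smul a x hx hpx =>
      rw [smul_eq_mul, smul_eq_mul, mul_left_comm]
      exact J.mul_mem_left a (by rwa [smul_eq_mul] at hpx)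
  rw [hsat] at hcolon
  exact hA.2 A' hle hne' hcolon

private lemma lex_lt_of_shift {C : Fin (n+1) →₀ ℕ} {i' i : Fin (n+1)} (h : i' < i)
    (hCi : C i ≠ 0) : toLex C < toLex (shiftM C i' i) := by
  refine Finsupp.Lex.lt_iff.2 ⟨i', ?_, ?_⟩
  · intro j hj
    show C j = (shiftM C i' i) j
    simp only [shiftM, Finsupp.tsub_apply, Finsupp.add_apply, Finsupp.single_apply]
    rw [if_neg (fun h' : i' = j => lt_irrefl j (h' ▸ hj)),
      if_neg (fun h' : i = j => lt_irrefl j (h' ▸ (hj.trans h))), add_zero, tsub_zero]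
  · show C i' < (shiftM C i' i) i'
    simp only [shiftM, Finsupp.tsub_apply, Finsupp.add_apply, Finsupp.single_eq_same]
    rw [Finsupp.single_eq_of_ne' (ne_of_gt h)]
    omega

private lemma drop_pen {J : Ideal (PR K n)} (hss : StronglyStable J)
    {D : Fin (n+1) →₀ ℕ} (hD : (mon D : PR K n) ∈ J) (hDp : D (penI n) ≠ 0)
    (hDl : D (lastI n) = 0) (hnotgen : ¬ MinGen J D) :
    (mon (D - Finsupp.single (penI n) 1) : PR K n) ∈ J := by
  obtain ⟨E, hEg, hED⟩ := div_gens hD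
  have hEDk := Finsupp.le_def.1 hED
  by_cases hEp : E (penI n) < D (penI n)
  · refine mem_of_le hEg.1 ?_
    rw [Finsupp.le_def]
    intro k
    rw [Finsupp.tsub_apply, Finsupp.single_apply]
    rcases eq_or_ne (penI n) k with h | h
    · rw [if_pos h, ← h]; omega
    · rw [if_neg h]; have := hEDk k; omega
  · have hEppen : E (penI n) = D (penI n) := le_antisymm (hEDk _) (not_lt.1 hEp)
    rcases eq_or_ne E D with rfl | hne
    · exact absurd hEg hnotgen
    · have hex : ∃ k, E k < D k := by
        by_contra h
        push_neg at h
        exact hne (Finsupp.ext fun k => le_antisymm (hEDk k) (h k))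
      obtain ⟨k, hk⟩ := hex
      have hkpen : k ≠ penI n := fun h => by rw [h, hEppen] at hk; exact lt_irrefl _ hk
      have hklast : k ≠ lastI n := fun h => by rw [h, hDl] at hk; omega
      have hklt : k < penI n := by
        rw [Fin.lt_def, penI_val]
        have h2 : (k : ℕ) ≠ n - 1 := fun h => hkpen (Fin.ext h)
        have h3 : (k : ℕ) ≠ n := fun h => hklast (Fin.ext h)
        have h4 := k.isLt
        omega
      have hE' := hss E hEg.1 k (penI n) (by rw [hEppen]; exact hDp) hklt
      refine mem_of_le hE' ?_
      rw [Finsupp.le_def]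
      intro m
      have h1 := hEDk m
      simp only [shiftM, Finsupp.add_apply, Finsupp.tsub_apply, Finsupp.single_apply]
      rcases eq_or_ne k m with rfl | hkm
      · rw [if_pos rfl, if_neg (fun h : penI n = k => hkpen h.symm)]
        omega
      · rw [if_neg hkm]
        rcases eq_or_ne (penI n) m with h | h
        · rw [if_pos h, ← h]
          omega
        · rw [if_neg h]; omega

private lemma left_shifts_mem (hn : 2 ≤ n) {J : Ideal (PR K n)} (hss : StronglyStable J)
    {C' : Fin (n+1) →₀ ℕ}
    (hzC : C' (lastI n) = 0) (hC : MinGen J C') (hCp : C' (penI n) ≠ 0)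
    (hmax : ∀ D, MinGen J D → D (penI n) ≠ 0 → toLex D ≤ toLex C') :
    ∀ B ∈ leftShifts (C' - Finsupp.single (penI n) 1), (mon B : PR K n) ∈ J := by
  rintro B ⟨i, h1i, hin, hAi, rfl⟩
  have hi'n : (i : ℕ) - 1 ≤ n := by omega
  set i' : Fin (n+1) := (((i : ℕ) - 1 : ℕ) : Fin (n+1)) with hi'def
  have hi'v : (i' : ℕ) = (i : ℕ) - 1 := cast_val_of_le hi'n
  have hi'i : i' < i := by rw [Fin.lt_def]; omega
  have hi'pen : i' ≠ penI n := by
    intro h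
    have h2 := congrArg Fin.val h
    rw [hi'v, penI_val] at h2
    omega
  have hi'last : i' ≠ lastI n := by
    intro h
    have h2 := congrArg Fin.val h
    rw [hi'v, lastI_val] at h2
    omega
  have hilast : i ≠ lastI n := by
    intro h
    have h2 := congrArg Fin.val h
    rw [lastI_val] at h2
    omega
  have hCi : C' i ≠ 0 := by
    rw [Finsupp.tsub_apply, Finsupp.single_apply] at hAi
    intro h; apply hAi; split_ifs <;> omega
  have hC2 : ∀ _ : i = penI n, 2 ≤ C' i := by
    intro h
    rw [Finsupp.tsub_apply, Finsupp.single_apply, if_pos h.symm] at hAi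
    omega
  set D := shiftM C' i' i with hDdef
  have hD : (mon D : PR K n) ∈ J := hss C' hC.1 i' i hCi hi'i
  have hDp : D (penI n) ≠ 0 := by
    rw [hDdef, shiftM, Finsupp.tsub_apply, Finsupp.add_apply,
      Finsupp.single_eq_of_ne' hi'pen]
    rcases eq_or_ne i (penI n) with h | h
    · have h2 := hC2 h
      rw [h] at h2 ⊢
      rw [Finsupp.single_eq_same]
      omega
    · rw [Finsupp.single_eq_of_ne' h]
      have := hCp
      omega
  have hDl : D (lastI n) = 0 := by
    rw [hDdef, shiftM, Finsupp.tsub_apply, Finsupp.add_apply,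
      Finsupp.single_eq_of_ne' hi'last, Finsupp.single_eq_of_ne' hilast]
    omega
  have hnotgen : ¬ MinGen J D := fun hgen =>
    absurd (hmax D hgen hDp) (not_le.2 (lex_lt_of_shift hi'i hCi))
  have hBD : shiftM (C' - Finsupp.single (penI n) 1) i' i = D - Finsupp.single (penI n) 1 := by
    ext m
    simp only [hDdef, shiftM, Finsupp.add_apply, Finsupp.tsub_apply, Finsupp.single_apply]
    split_ifs <;>
      first
        | omega
        | (exfalso
           simp only [Fin.ext_iff, penI_val, lastI_val] at *
           omega)
  rw [hBD]
  exact drop_pen hss hD hDp hDl hnotgen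

private lemma not_mem_expSet_self (A : Fin (n+1) →₀ ℕ) : A ∉ expSet A := by
  rintro ⟨m, -, -, h⟩
  have h2 := congrArg (fun f : Fin (n+1) →₀ ℕ => f m) h
  simp [Finsupp.add_apply, Finsupp.single_eq_same] at h2

private lemma ss_contraction (hn : 2 ≤ n) {J : Ideal (PR K n)} (hss : StronglyStable J)
    {A : Fin (n+1) →₀ ℕ} (hAl : A (lastI n) = 0)
    (hL : ∀ B ∈ leftShifts A, (mon B : PR K n) ∈ J) :
    StronglyStable (contractionIdeal J A) := by
  have hctr : contractionIdeal J A = spanMon K ((Gens J ∪ {A}) \ expSet A) := rfl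
  intro B hB i j hBj hij
  rw [hctr, mon_mem_spanMon] at hB ⊢
  obtain ⟨E, hEG, hEB⟩ := hB
  have hEBk := Finsupp.le_def.1 hEB
  by_cases hEj : E j < B j
  · refine ⟨E, hEG, ?_⟩
    rw [Finsupp.le_def]
    intro m
    simp only [shiftM, Finsupp.add_apply, Finsupp.tsub_apply, Finsupp.single_apply]
    rcases eq_or_ne j m with rfl | hjm
    · rw [if_pos rfl, if_neg (fun h : i = j => (ne_of_lt hij) h)]
      omega
    · rw [if_neg hjm]
      have := hEBk m
      split_ifs <;> omega
  · have hEj' : E j = B j := le_antisymm (hEBk j) (not_lt.1 hEj)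
    have hEjne : E j ≠ 0 := by rw [hEj']; exact hBj
    have hshle : shiftM E i j ≤ shiftM B i j := by
      rw [Finsupp.le_def]
      intro m
      have := hEBk m
      simp only [shiftM, Finsupp.add_apply, Finsupp.tsub_apply, Finsupp.single_apply]
      split_ifs <;> omega
    suffices hEJ' : (mon (shiftM E i j) : PR K n) ∈ J by
      obtain ⟨F, hFg, hFle⟩ := div_gens hEJ'
      by_cases hFe : F ∈ expSet A
      · obtain ⟨m, -, -, rfl⟩ := hFe
        refine ⟨A, ⟨Or.inr rfl, not_mem_expSet_self A⟩, ?_⟩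
        exact le_trans (le_trans (self_le_add_right A _) hFle) hshle
      · exact ⟨F, ⟨Or.inl hFg, hFe⟩, hFle.trans hshle⟩
    rcases hEG.1 with hEgen | hEA
    · exact hss E hEgen.1 i j hEjne hij
    · obtain rfl : E = A := hEA
      have hj1 : 1 ≤ (j : ℕ) := by
        have := hij
        rw [Fin.lt_def] at this
        omega
      have hjlast : j ≠ lastI n := fun h => hEjne (by rw [h]; exact hAl)
      have hjn : (j : ℕ) + 1 ≤ n := by
        have h1 := j.isLt
        have h2 : (j : ℕ) ≠ n := fun h => hjlast (Fin.ext h)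
        omega
      have hB₁ : (mon (shiftM E (((j : ℕ) - 1 : ℕ) : Fin (n+1)) j) : PR K n) ∈ J :=
        hL _ ⟨j, hj1, hjn, hEjne, rfl⟩
      set j' : Fin (n+1) := (((j : ℕ) - 1 : ℕ) : Fin (n+1)) with hj'def
      have hj'v : (j' : ℕ) = (j : ℕ) - 1 := cast_val_of_le (by omega)
      have hj'j : j' ≠ j := by
        intro h
        have h2 := congrArg Fin.val h
        rw [hj'v] at h2
        omega
      rcases eq_or_ne i j' with rfl | hij'
      · exact hB₁
      · have hilt : i < j' := by
          rw [Fin.lt_def]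
          have h1 : (i : ℕ) ≠ (j' : ℕ) := fun h => hij' (Fin.ext h)
          have h2 := hij
          rw [Fin.lt_def] at h2
          omega
        have hB₁j' : (shiftM E j' j) j' ≠ 0 := by
          simp only [shiftM, Finsupp.add_apply, Finsupp.tsub_apply, Finsupp.single_eq_same,
            Finsupp.single_apply, if_neg (fun h : j = j' => hj'j h.symm)]
          omega
        have h2 := hss _ hB₁ i j' hB₁j' hilt
        have h3 : shiftM (shiftM E j' j) i j' = shiftM E i j := by
          ext m
          simp only [shiftM, Finsupp.add_apply, Finsupp.tsub_apply, Finsupp.single_apply]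
          split_ifs <;>
            first
              | omega
              | (exfalso
                 simp only [Fin.ext_iff, penI_val, lastI_val] at *
                 omega)
        rwa [h3] at h2

private lemma sat_contraction {J : Ideal (PR K n)} {A : Fin (n+1) →₀ ℕ}
    (hz' : ∀ s ∈ (Gens J ∪ {A}) \ expSet A, s (lastI n) = 0) :
    Saturated (contractionIdeal J A) := by
  have hctr : contractionIdeal J A = spanMon K ((Gens J ∪ {A}) \ expSet A) := rfl
  apply le_antisymm
  · intro f hf
    rw [Submodule.mem_colon] at hf
    have hX : (X (lastI n) : PR K n) ∈ irrIdeal K n := Ideal.subset_span ⟨lastI n, rfl⟩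
    have h2 : (X (lastI n) : PR K n) * f ∈ contractionIdeal J A := by
      have := hf _ hX
      rwa [smul_eq_mul, mul_comm] at this
    rw [hctr, mem_spanMon] at h2 ⊢
    intro d hd
    have hd' : Finsupp.single (lastI n) 1 + d ∈ ((X (lastI n) : PR K n) * f).support := by
      rw [support_X_mul]
      exact Finset.mem_map.2 ⟨d, hd, rfl⟩
    obtain ⟨s, hs, hsle⟩ := h2 _ hd'
    refine ⟨s, hs, ?_⟩
    rw [Finsupp.le_def]
    intro k
    have h3 := Finsupp.le_def.1 hsle k
    rw [Finsupp.add_apply, Finsupp.single_apply] at h3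
    rcases eq_or_ne (lastI n) k with h | h
    · rw [← h, hz' s hs]
      omega
    · rw [if_neg h] at h3
      omega
  · intro f hf
    rw [Submodule.mem_colon]
    intro p hp
    rw [smul_eq_mul]
    exact Ideal.mul_mem_right p _ hf

private lemma doubleSat_spanMon {S : Set (Fin (n+1) →₀ ℕ)} :
    doubleSat (spanMon K S) = spanMon K (stripLastTwo '' S) := by
  rw [doubleSat_eq]
  apply le_antisymm
  · rw [spanMon, Ideal.span_le]
    rintro _ ⟨_, ⟨B, hB, rfl⟩, rfl⟩
    exact Ideal.subset_span ⟨stripLastTwo B, ⟨B, gens_spanMon_subset hB, rfl⟩, rfl⟩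
  · rw [spanMon, Ideal.span_le]
    rintro _ ⟨_, ⟨t, ht, rfl⟩, rfl⟩
    have hmem : (mon t : PR K n) ∈ spanMon K S := Ideal.subset_span ⟨t, ht, rfl⟩
    obtain ⟨g, hg, hgs⟩ := div_gens hmem
    exact mon_mem_spanMon.2 ⟨stripLastTwo g, ⟨g, hg, rfl⟩, strip_mono hgs⟩

private lemma strip_span_G' {J : Ideal (PR K n)} {A C : Fin (n+1) →₀ ℕ}
    (hC : MinGen J C) (hCA : A + Finsupp.single (penI n) 1 = C) :
    spanMon K (stripLastTwo '' ((Gens J ∪ {A}) \ expSet A)) =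
      spanMon K (stripLastTwo '' Gens J) := by
  have hstripA : stripLastTwo A = stripLastTwo C := by rw [← hCA, strip_add_single_pen]
  apply le_antisymm
  · rw [spanMon, Ideal.span_le]
    rintro _ ⟨_, ⟨t, ht, rfl⟩, rfl⟩
    rcases ht.1 with hsg | hsA
    · exact Ideal.subset_span ⟨_, ⟨t, hsg, rfl⟩, rfl⟩
    · obtain rfl : t = A := hsA
      rw [hstripA]
      exact Ideal.subset_span ⟨_, ⟨C, hC, rfl⟩, rfl⟩
  · rw [spanMon, Ideal.span_le]
    rintro _ ⟨_, ⟨g, hg, rfl⟩, rfl⟩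
    by_cases hge : g ∈ expSet A
    · obtain ⟨m, -, -, rfl⟩ := hge
      refine mon_mem_spanMon.2 ⟨stripLastTwo A, ⟨A, ⟨Or.inr rfl, not_mem_expSet_self A⟩, rfl⟩, ?_⟩
      exact strip_mono (self_le_add_right A _)
    · exact Ideal.subset_span ⟨_, ⟨g, ⟨Or.inl hg, hge⟩, rfl⟩, rfl⟩

private lemma maxIdx_le {A : Fin (n+1) →₀ ℕ} (hA0 : A ≠ 0) (hAl : A (lastI n) = 0) :
    ((maxIdx A : Fin (n+1)) : ℕ) ≤ n - 1 := by
  obtain ⟨m, hm⟩ := Finset.max_of_nonempty (Finsupp.support_nonempty_iff.2 hA0)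
  have hmem : m ∈ A.support := Finset.mem_of_max hm
  have hm' : A m ≠ 0 := Finsupp.mem_support_iff.1 hmem
  have hne : m ≠ lastI n := fun h => hm' (by rw [h]; exact hAl)
  have h1 : (m : ℕ) ≠ n := fun h => hne (Fin.ext h)
  have h2 := m.isLt
  rw [maxIdx, hm, WithBot.unbotD_coe]
  omega

private lemma meas_lt (hn : 2 ≤ n) {J : Ideal (PR K n)} {A C : Fin (n+1) →₀ ℕ}
    (hC : MinGen J C) (hCA : A + Finsupp.single (penI n) 1 = C)
    (hAJ : (mon A : PR K n) ∉ J) (hAl : A (lastI n) = 0) (hA0 : A ≠ 0) :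
    meas (contractionIdeal J A) < meas J := by
  classical
  have hctr : contractionIdeal J A = spanMon K ((Gens J ∪ {A}) \ expSet A) := rfl
  have hCe : C ∈ expSet A := by
    refine ⟨penI n, ?_, ?_, hCA.symm⟩
    · rw [penI_val]; exact maxIdx_le hA0 hAl
    · rw [penI_val]; omega
  have hAC : A (penI n) + 1 = C (penI n) := by
    rw [← hCA, Finsupp.add_apply, Finsupp.single_eq_same]
  have hAT : A ∉ gensF J := fun h => hAJ (mem_gensF.1 h).1
  have hCT : C ∈ gensF J := mem_gensF.2 hC
  have hCnot : C ∉ gensF (contractionIdeal J A) := by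
    intro h
    have h2 : C ∈ Gens (spanMon K ((Gens J ∪ {A}) \ expSet A)) := by
      rw [← hctr]; exact mem_gensF.1 h
    exact (gens_spanMon_subset h2).2 hCe
  have hsub2 : gensF (contractionIdeal J A) ⊆ insert A ((gensF J).erase C) := by
    intro B hB
    have h2 : B ∈ Gens (spanMon K ((Gens J ∪ {A}) \ expSet A)) := by
      rw [← hctr]; exact mem_gensF.1 hB
    have h3 := gens_spanMon_subset h2
    rcases h3.1 with h | h
    · refine Finset.mem_insert_of_mem (Finset.mem_erase.2 ⟨?_, mem_gensF.2 h⟩)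
      intro he
      rw [he] at hB
      exact hCnot hB
    · obtain rfl : B = A := h
      exact Finset.mem_insert_self _ _
  have hAerase : A ∉ (gensF J).erase C := fun h => hAT (Finset.mem_of_mem_erase h)
  have h4 : meas (contractionIdeal J A) ≤ A (penI n) + ∑ B ∈ (gensF J).erase C, B (penI n) := by
    rw [meas]
    calc ∑ B ∈ gensF (contractionIdeal J A), B (penI n)
        ≤ ∑ B ∈ insert A ((gensF J).erase C), B (penI n) :=
          Finset.sum_le_sum_of_subset hsub2
      _ = A (penI n) + ∑ B ∈ (gensF J).erase C, B (penI n) := Finset.sum_insert hAerase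
  have h5 : ∑ B ∈ (gensF J).erase C, B (penI n) + C (penI n) = meas J := by
    rw [meas]
    exact Finset.sum_erase_add _ _ hCT
  omega

private lemma master (hn : 2 ≤ n) : ∀ m : ℕ, ∀ J : Ideal (PR K n), IsMonomialIdeal J →
    StronglyStable J → Saturated J → meas J = m →
    Relation.ReflTransGen ContrStep J (doubleSat J) := by
  intro m
  induction m using Nat.strong_induction_on with
  | _ m ih =>
    intro J hmono hss hsat hm
    have hz : ∀ B, MinGen J B → B (lastI n) = 0 := fun B hB => mingen_last_zero hss hsat hB
    by_cases hex : ∃ C, MinGen J C ∧ C (penI n) ≠ 0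
    · classical
      set T' : Finset (Fin (n+1) →₀ ℕ) :=
        (gensF J).filter (fun C => C (penI n) ≠ 0) with hT'
      have hT'ne : T'.Nonempty := by
        obtain ⟨C, h1, h2⟩ := hex
        exact ⟨C, Finset.mem_filter.2 ⟨mem_gensF.2 h1, h2⟩⟩
      obtain ⟨C, hCT', hmax⟩ := T'.exists_max_image (fun C => toLex C) hT'ne
      have hCmin : MinGen J C := mem_gensF.1 (Finset.mem_filter.1 hCT').1
      have hCp : C (penI n) ≠ 0 := (Finset.mem_filter.1 hCT').2
      have hmax' : ∀ D, MinGen J D → D (penI n) ≠ 0 → toLex D ≤ toLex C := fun D h1 h2 =>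
        hmax D (Finset.mem_filter.2 ⟨mem_gensF.2 h1, h2⟩)
      set A := C - Finsupp.single (penI n) 1 with hAdef
      have hCA : A + Finsupp.single (penI n) 1 = C := by
        ext k
        simp only [hAdef, Finsupp.add_apply, Finsupp.tsub_apply, Finsupp.single_apply]
        rcases eq_or_ne (penI n) k with h | h
        · rw [if_pos h, ← h]
          have := hCp
          omega
        · rw [if_neg h]
          omega
      have hAJ : (mon A : PR K n) ∉ J := by
        intro hA
        obtain ⟨g, hg, hgA⟩ := div_gens hA
        have hgC : g ≤ A := hgA
        have hgC' : g ≤ C := le_trans hgA tsub_le_self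
        have hgne : g ≠ C := by
          intro h
          have h2 := Finsupp.le_def.1 hgA (penI n)
          rw [h, hAdef, Finsupp.tsub_apply, Finsupp.single_eq_same] at h2
          omega
        exact hCmin.2 g hgC' hgne hg.1
      rcases eq_or_ne A 0 with hA0 | hA0
      · have hCs : C = Finsupp.single (penI n) 1 := by rw [← hCA, hA0, zero_add]
        have hstep : ContrStep J ⊤ :=
          Or.inr ⟨by rw [cast_pen, ← hCs]; exact hCmin, rfl⟩
        have htop : doubleSat J = ⊤ := by
          rw [Ideal.eq_top_iff_one]
          have h0 : stripLastTwo C = 0 := by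
            ext k
            rw [strip_apply]
            split_ifs with g1 g2
            · rfl
            · rfl
            · rw [hCs, Finsupp.single_apply, if_neg (fun h => g1 h.symm)]
              rfl
          have hmem : (mon (stripLastTwo C) : PR K n) ∈ doubleSat J :=
            Ideal.subset_span ⟨C, hCmin, rfl⟩
          rw [h0] at hmem
          simpa [mon] using hmem
        rw [htop]
        exact Relation.ReflTransGen.single hstep
      · have hAl : A (lastI n) = 0 := by
          rw [hAdef, Finsupp.tsub_apply, hz C hCmin]
          omega
        have hL : ∀ B ∈ leftShifts A, (mon B : PR K n) ∈ J :=
          left_shifts_mem hn hss (hz C hCmin) hCmin hCp hmax'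
        have hcontr : Contractible J A := by
          refine ⟨hA0, hAJ, ?_, hL⟩
          rw [cast_pen, hCA]
          exact hCmin
        have hstep : ContrStep J (contractionIdeal J A) := Or.inl ⟨A, hcontr, rfl⟩
        have hctr : contractionIdeal J A = spanMon K ((Gens J ∪ {A}) \ expSet A) := rfl
        have hz' : ∀ s ∈ (Gens J ∪ {A}) \ expSet A, s (lastI n) = 0 := by
          rintro s ⟨hs, -⟩
          rcases hs with hs | hs
          · exact hz s hs
          · obtain rfl : s = A := hs
            exact hAl
        have hmono' : IsMonomialIdeal (contractionIdeal J A) := ⟨_, hctr⟩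
        have hss' : StronglyStable (contractionIdeal J A) := ss_contraction hn hss hAl hL
        have hsat' : Saturated (contractionIdeal J A) := sat_contraction hz'
        have hlt : meas (contractionIdeal J A) < m := hm ▸ meas_lt hn hCmin hCA hAJ hAl hA0
        have hrec := ih _ hlt (contractionIdeal J A) hmono' hss' hsat' rfl
        have hds : doubleSat (contractionIdeal J A) = doubleSat J := by
          calc doubleSat (contractionIdeal J A)
              = spanMon K (stripLastTwo '' ((Gens J ∪ {A}) \ expSet A)) := by
                rw [hctr, doubleSat_spanMon]
            _ = spanMon K (stripLastTwo '' Gens J) := strip_span_G' hCmin hCA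
            _ = doubleSat J := (doubleSat_eq J).symm
        exact Relation.ReflTransGen.head hstep (hds ▸ hrec)
    · push_neg at hex
      have hds : doubleSat J = J := by
        have himg : stripLastTwo '' Gens J = Gens J := by
          rw [show stripLastTwo '' Gens J = id '' Gens J from
            Set.image_congr (fun B hB => strip_eq_self (hex B hB) (hz B hB)), Set.image_id]
        rw [doubleSat_eq, himg, ← span_gens hmono]
      rw [hds]

end AuxProof
/-- a finite sequence of contractions takes a saturated strongly stable
ideal to its double saturation. -/
theorem contractions_to_doubleSat
    {K : Type*} [Field K] {n : ℕ} (hn : 2 ≤ n) (I : Ideal (PR K n))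
    (hmono : IsMonomialIdeal I) (hss : StronglyStable I) (hsat : Saturated I) :
    Relation.ReflTransGen ContrStep I (doubleSat I) := by
  exact master hn (meas I) I hmono hss hsat rfl
end
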